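/- The ratio Z(2n)/Z(n) is not bounded above: for every real number L > 0 there exists a positive integer n such that Z(2n) > L · Z(n). -/

import Mathlib

/-- The m-th triangular number. -/
def T (m : ℕ) : ℕ := m * (m + 1) / 2

/-- The pseudo-Smarandache function: the least positive m with n ∣ T m. -/
noncomputable def Z (n : ℕ) : ℕ := sInf {m : ℕ | 0 < m ∧ n ∣ T m}

lemma two_T (m : ℕ) : 2 * T m = m * (m + 1) :=
  Nat.mul_div_cancel' (Nat.even_mul_succ_self m).two_dvd

lemma Z_le {n m : ℕ} (hm : 0 < m) (h : n ∣ T m) : Z n ≤ m := Nat.sInf_le ⟨hm, h⟩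

lemma Z_mem (n : ℕ) (hn : 0 < n) : 0 < Z n ∧ n ∣ T (Z n) := by
  have hw : (2 * n - 1) ∈ {m : ℕ | 0 < m ∧ n ∣ T m} := by
    refine ⟨by omega, ?_⟩
    have hT : T (2 * n - 1) = n * (2 * n - 1) := by
      have h2 : 2 * T (2 * n - 1) = (2 * n - 1) * (2 * n - 1 + 1) := two_T _
      have he : 2 * n - 1 + 1 = 2 * n := by omega
      rw [he] at h2
      have : (2 * n - 1) * (2 * n) = 2 * (n * (2 * n - 1)) := by ring
      omega
    rw [hT]
    exact Dvd.intro _ rfl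
  exact Nat.sInf_mem ⟨_, hw⟩

lemma le_of_cast_eq {q s c : ℕ} (hq : 0 < q) (hc : c < q)
    (h : (s : ZMod q) = (c : ZMod q)) : c ≤ s := by
  haveI : NeZero q := ⟨hq.ne'⟩
  have hmod : s ≡ c [MOD q] := (ZMod.natCast_eq_natCast_iff s c q).mp h
  have h2 : s % q = c := by
    have := hmod
    rw [Nat.ModEq] at this
    rw [this, Nat.mod_eq_of_lt hc]
  calc c = s % q := h2.symm
    _ ≤ s := Nat.mod_le s q

theorem stmt_12 (L : ℝ) (hL : 0 < L) :
    ∃ n : ℕ, 0 < n ∧ (Z (2 * n) : ℝ) > L * (Z n : ℝ) := by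
  obtain ⟨q, hqge, hq⟩ := Nat.exists_infinite_primes (⌈L⌉₊ + 3)
  haveI : Fact q.Prime := ⟨hq⟩
  have hq3 : 3 ≤ q := le_trans (by omega) hqge
  have hqodd : Odd q := hq.odd_of_ne_two (by omega)
  have h2ne : (2 : ZMod q) ≠ 0 := by
    have h : ((2 : ℕ) : ZMod q) ≠ 0 := by
      rw [Ne, ZMod.natCast_eq_zero_iff]
      exact fun h => absurd (Nat.le_of_dvd two_pos h) (by omega)
    simpa using h
  -- Fermat's little theorem : q ∣ 2^(q-1) - 1
  have hfermat : q ∣ 2 ^ (q - 1) - 1 := by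
    have h1 : (2 : ZMod q) ^ (q - 1) = 1 := ZMod.pow_card_sub_one_eq_one h2ne
    have hle : 1 ≤ 2 ^ (q - 1) := Nat.one_le_two_pow
    have hz : ((2 ^ (q - 1) - 1 : ℕ) : ZMod q) = 0 := by
      push_cast [Nat.cast_sub hle]
      rw [h1]; ring
    exact (ZMod.natCast_eq_zero_iff _ q).mp hz
  set A : ℕ := 2 ^ (q - 2) with hA
  set n : ℕ := A * q with hn
  have hApos : 0 < A := Nat.pow_pos (by norm_num)
  have hnpos : 0 < n := Nat.mul_pos hApos (by omega)
  have h2A : 2 * A = 2 ^ (q - 1) := by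
    rw [hA, ← pow_succ']
    congr 1; omega
  have h4A : 4 * A = 2 ^ q := by
    have h : 4 * A = 2 * (2 * A) := by ring
    rw [h, h2A, ← pow_succ']
    congr 1; omega
  -- Upper bound : Z n ≤ 2*A - 1
  have hub : Z n ≤ 2 * A - 1 := by
    apply Z_le (by omega)
    have hT : T (2 * A - 1) = A * (2 * A - 1) := by
      have h2 : 2 * T (2 * A - 1) = (2 * A - 1) * (2 * A - 1 + 1) := two_T _
      have he : 2 * A - 1 + 1 = 2 * A := by omega
      rw [he] at h2
      have : (2 * A - 1) * (2 * A) = 2 * (A * (2 * A - 1)) := by ring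
      omega
    rw [hT, hn]
    refine Nat.mul_dvd_mul_left A ?_
    rwa [← h2A] at hfermat
  -- Lower bound : every m with 0 < m and 2n ∣ T m satisfies (q-1)*(2*A) ≤ m
  have hlb : ∀ m : ℕ, 0 < m → 2 * n ∣ T m → (q - 1) * (2 * A) ≤ m := by
    intro m hm hdvd
    have hdvd4 : 2 ^ q * q ∣ m * (m + 1) := by
      have h1 : 2 * (2 * n) ∣ 2 * T m := mul_dvd_mul_left 2 hdvd
      rw [two_T] at h1
      have he : 2 * (2 * n) = 2 ^ q * q := by rw [hn, ← h4A]; ring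
      rwa [he] at h1
    have h2dvd : 2 ^ q ∣ m ∨ 2 ^ q ∣ m + 1 := by
      have hd : 2 ^ q ∣ m * (m + 1) := dvd_trans (dvd_mul_right _ _) hdvd4
      rcases Nat.even_or_odd m with he | ho
      · exact Or.inl ((Nat.Coprime.pow_left q
          (Nat.coprime_two_left.mpr (Even.add_one he))).dvd_of_dvd_mul_right hd)
      · exact Or.inr ((Nat.Coprime.pow_left q
          (Nat.coprime_two_left.mpr ho)).dvd_of_dvd_mul_left hd)
    have hqdvd : q ∣ m ∨ q ∣ m + 1 :=
      (hq.dvd_mul).mp (dvd_trans (dvd_mul_left _ _) hdvd4)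
    have hcoAq : Nat.Coprime (2 ^ q) q :=
      Nat.Coprime.pow_left q (Nat.coprime_two_left.mpr hqodd)
    have hpow2 : (2 : ZMod q) ^ q = 2 := ZMod.pow_card (2 : ZMod q)
    rcases h2dvd with h2 | h2 <;> rcases hqdvd with hqd | hqd
    · -- 2^q ∣ m and q ∣ m
      have hd : 2 ^ q * q ∣ m := hcoAq.mul_dvd_of_dvd_of_dvd h2 hqd
      have hge : 2 ^ q * q ≤ m := Nat.le_of_dvd hm hd
      calc (q - 1) * (2 * A) = (2 * A) * (q - 1) := by ring
        _ ≤ (2 * A) * (2 * q) := Nat.mul_le_mul_left _ (by omega)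
        _ = 2 ^ q * q := by rw [← h4A]; ring
        _ ≤ m := hge
    · -- 2^q ∣ m and q ∣ m + 1 : the key case
      obtain ⟨s, hs⟩ := h2
      have hspos : 0 < s := by
        rcases Nat.eq_zero_or_pos s with h0 | h
        · rw [h0, mul_zero] at hs; omega
        · exact h
      set c : ℕ := (q - 1) / 2 with hc
      have h2c : 2 * c = q - 1 := by
        obtain ⟨t, ht⟩ := hqodd; omega
      have hcq : c < q := by omega
      have hm1 : ((m + 1 : ℕ) : ZMod q) = 0 :=
        (ZMod.natCast_eq_zero_iff _ q).mpr hqd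
      have hmz : ((m : ℕ) : ZMod q) = -1 := by
        push_cast at hm1
        linear_combination hm1
      have hsc : (2 : ZMod q) * (s : ZMod q) = -1 := by
        calc (2 : ZMod q) * s = (2 : ZMod q) ^ q * s := by rw [hpow2]
          _ = ((2 ^ q * s : ℕ) : ZMod q) := by push_cast; ring
          _ = ((m : ℕ) : ZMod q) := by rw [← hs]
          _ = -1 := hmz
      have hcc : (2 : ZMod q) * (c : ZMod q) = -1 := by
        have hcast : ((2 * c : ℕ) : ZMod q) = ((q - 1 : ℕ) : ZMod q) := by rw [h2c]
        push_cast [Nat.cast_sub (by omega : 1 ≤ q)] at hcast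
        rw [hcast, ZMod.natCast_self]
        ring
      have hseq : (s : ZMod q) = (c : ZMod q) :=
        mul_left_cancel₀ h2ne (hsc.trans hcc.symm)
      have hcs : c ≤ s := le_of_cast_eq (by omega) hcq hseq
      calc (q - 1) * (2 * A) = (2 * c) * (2 * A) := by rw [h2c]
        _ = (4 * A) * c := by ring
        _ = 2 ^ q * c := by rw [h4A]
        _ ≤ 2 ^ q * s := Nat.mul_le_mul_left _ hcs
        _ = m := hs.symm
    · -- 2^q ∣ m + 1 and q ∣ m : the other key case
      obtain ⟨s, hs⟩ := h2
      have hspos : 0 < s := by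
        rcases Nat.eq_zero_or_pos s with h0 | h
        · rw [h0, mul_zero] at hs; omega
        · exact h
      set c : ℕ := (q + 1) / 2 with hc
      have h2c : 2 * c = q + 1 := by
        obtain ⟨t, ht⟩ := hqodd; omega
      have hcq : c < q := by omega
      have hmz : ((m : ℕ) : ZMod q) = 0 :=
        (ZMod.natCast_eq_zero_iff _ q).mpr hqd
      have hsc : (2 : ZMod q) * (s : ZMod q) = 1 := by
        calc (2 : ZMod q) * s = (2 : ZMod q) ^ q * s := by rw [hpow2]
          _ = ((2 ^ q * s : ℕ) : ZMod q) := by push_cast; ring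
          _ = ((m + 1 : ℕ) : ZMod q) := by rw [← hs]
          _ = 1 := by push_cast [hmz]; ring
      have hcc : (2 : ZMod q) * (c : ZMod q) = 1 := by
        have hcast : ((2 * c : ℕ) : ZMod q) = ((q + 1 : ℕ) : ZMod q) := by rw [h2c]
        push_cast at hcast
        rw [hcast, ZMod.natCast_self]
        ring
      have hseq : (s : ZMod q) = (c : ZMod q) :=
        mul_left_cancel₀ h2ne (hsc.trans hcc.symm)
      have hcs : c ≤ s := le_of_cast_eq (by omega) hcq hseq
      have hge : (2 * A) * (q + 1) ≤ m + 1 := by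
        calc (2 * A) * (q + 1) = (4 * A) * c := by rw [← h2c]; ring
          _ = 2 ^ q * c := by rw [h4A]
          _ ≤ 2 ^ q * s := Nat.mul_le_mul_left _ hcs
          _ = m + 1 := hs.symm
      have hkey : (2 * A) * (q + 1) = (2 * A) * (q - 1) + (2 * A) * 2 := by
        rw [← Nat.mul_add]; congr 1; omega
      have hApos' : 1 ≤ (2 * A) * 2 := by omega
      calc (q - 1) * (2 * A) = (2 * A) * (q - 1) := by ring
        _ ≤ m := by omega
    · -- 2^q ∣ m + 1 and q ∣ m + 1
      have hd : 2 ^ q * q ∣ m + 1 := hcoAq.mul_dvd_of_dvd_of_dvd h2 hqd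
      have hge : 2 ^ q * q ≤ m + 1 := Nat.le_of_dvd (by omega) hd
      have hkey : (2 * A) * (q - 1) + (2 * A) * 1 ≤ (2 * A) * (2 * q) := by
        rw [← Nat.mul_add]
        exact Nat.mul_le_mul_left _ (by omega)
      have hge' : (2 * A) * (2 * q) ≤ m + 1 := by
        calc (2 * A) * (2 * q) = 2 ^ q * q := by rw [← h4A]; ring
          _ ≤ m + 1 := hge
      have hApos' : 1 ≤ (2 * A) * 1 := by omega
      calc (q - 1) * (2 * A) = (2 * A) * (q - 1) := by ring
        _ ≤ m := by omega
  -- combine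
  have hZ2 : (q - 1) * (2 * A) ≤ Z (2 * n) := by
    obtain ⟨hpos, hdvd⟩ := Z_mem (2 * n) (by omega)
    exact hlb _ hpos hdvd
  refine ⟨n, hnpos, ?_⟩
  have hLlt : L < ((q - 1 : ℕ) : ℝ) := by
    have h1 : L ≤ (⌈L⌉₊ : ℝ) := Nat.le_ceil L
    have h2 : (⌈L⌉₊ : ℝ) < ((q - 1 : ℕ) : ℝ) := by
      exact_mod_cast (by omega : ⌈L⌉₊ < q - 1)
    linarith
  have hstep1 : L * (Z n : ℝ) ≤ L * ((2 * A - 1 : ℕ) : ℝ) :=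
    mul_le_mul_of_nonneg_left (Nat.cast_le.mpr hub) hL.le
  have hstep2 : L * ((2 * A - 1 : ℕ) : ℝ) < ((q - 1 : ℕ) : ℝ) * ((2 * A - 1 : ℕ) : ℝ) := by
    have hpos : (0 : ℝ) < ((2 * A - 1 : ℕ) : ℝ) := by
      exact_mod_cast (by omega : 0 < 2 * A - 1)
    exact mul_lt_mul_of_pos_right hLlt hpos
  have hstep3 : ((q - 1 : ℕ) : ℝ) * ((2 * A - 1 : ℕ) : ℝ)
      ≤ (((q - 1) * (2 * A) : ℕ) : ℝ) := by
    push_cast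
    have hq1 : (0 : ℝ) ≤ ((q - 1 : ℕ) : ℝ) := Nat.cast_nonneg _
    have hle : ((2 * A - 1 : ℕ) : ℝ) ≤ ((2 * A : ℕ) : ℝ) := Nat.cast_le.mpr (by omega)
    push_cast at hle
    nlinarith
  have hstep4 : (((q - 1) * (2 * A) : ℕ) : ℝ) ≤ (Z (2 * n) : ℝ) := Nat.cast_le.mpr hZ2
  linarith
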